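/- Let n > m ≥ 2, let Z_1, …, Z_N be m-dimensional Euclidean cylinders in ℝ^n, where each Z_i is the image under a Euclidean isometry of ℝ^n of X_i × ℝ^m (identifying ℝ^n with ℝ^{n−m} × ℝ^m) with X_i a convex body in ℝ^{n−m}, and let t_1, …, t_N ≥ 0 be weights such that for every point x of the closed Euclidean unit ball B^n one has Σ_{i : x ∈ Z_i} t_i ≥ 1. Then Σ_{i=1}^{N} t_i · vol_{n−m}(X_i) ≥ π^{(n−m)/2} Γ(m/2) / Γ(n/2). -/

import Mathlib

open MeasureTheory
open scoped Classical

open scoped ENNReal RealInnerProductSpace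

noncomputable section FracCover

/-! ### The weight function and its integral -/

def fcW (β s : ℝ) : ℝ≥0∞ := if s < 1 then ENNReal.ofReal ((1 - s) ^ β) else 0

lemma fcW_measurable (β : ℝ) : Measurable (fcW β) := by
  unfold fcW
  exact Measurable.ite measurableSet_Iio
    (((measurable_const.sub measurable_id).pow measurable_const).ennreal_ofReal)
    measurable_const

def fcJ (b : ℕ) (β : ℝ) : ℝ≥0∞ :=
  ∫⁻ z : EuclideanSpace ℝ (Fin b), fcW β (‖z‖ ^ 2)

lemma fcW_norm_measurable (β : ℝ) {b : ℕ} :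
    Measurable fun z : EuclideanSpace ℝ (Fin b) => fcW β (‖z‖ ^ 2) :=
  (fcW_measurable β).comp ((measurable_norm).pow measurable_const)

lemma fc_normsq {b : ℕ} (x : EuclideanSpace ℝ (Fin b)) : ‖x‖ ^ 2 = ∑ i, x i ^ 2 := by
  rw [EuclideanSpace.norm_eq, Real.sq_sqrt (by positivity)]
  simp [Real.norm_eq_abs, sq_abs]

/-! ### Scaling lemma -/

lemma fcA {b : ℕ} {β a : ℝ} (ha : 0 < a) (c : EuclideanSpace ℝ (Fin b)) :
    ∫⁻ z : EuclideanSpace ℝ (Fin b), fcW β ((1 - a) + ‖z - c‖ ^ 2)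
      = ENNReal.ofReal (a ^ (β + b / 2)) * fcJ b β := by
  have hmW : ∀ d : ℝ, Measurable (fun z : EuclideanSpace ℝ (Fin b) => fcW β (d + ‖z‖ ^ 2)) :=
    fun d => (fcW_measurable β).comp
      (measurable_const.add ((measurable_norm).pow measurable_const))
  have h1 : ∫⁻ z : EuclideanSpace ℝ (Fin b), fcW β ((1 - a) + ‖z - c‖ ^ 2)
      = ∫⁻ z : EuclideanSpace ℝ (Fin b), fcW β ((1 - a) + ‖z‖ ^ 2) :=
    lintegral_sub_right_eq_self (fun z => fcW β ((1 - a) + ‖z‖ ^ 2)) c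
  rw [h1]
  set r : ℝ := Real.sqrt a with hr
  have hr0 : 0 < r := Real.sqrt_pos.mpr ha
  have hmap : Measure.map (r • · : EuclideanSpace ℝ (Fin b) → _) volume
      = ENNReal.ofReal |(r ^ (Module.finrank ℝ (EuclideanSpace ℝ (Fin b))))⁻¹| • volume :=
    Measure.map_addHaar_smul volume hr0.ne'
  have h2 : ∫⁻ u : EuclideanSpace ℝ (Fin b), fcW β ((1 - a) + ‖r • u‖ ^ 2)
      = ENNReal.ofReal ((r ^ b)⁻¹) * ∫⁻ z : EuclideanSpace ℝ (Fin b), fcW β ((1 - a) + ‖z‖ ^ 2) := by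
    show _ = ENNReal.ofReal ((r ^ b)⁻¹) • ∫⁻ z : EuclideanSpace ℝ (Fin b), fcW β ((1 - a) + ‖z‖ ^ 2)
    rw [← lintegral_smul_measure]
    rw [show (ENNReal.ofReal ((r ^ b)⁻¹) • volume : Measure (EuclideanSpace ℝ (Fin b)))
        = Measure.map (r • ·) volume by
      rw [hmap, finrank_euclideanSpace_fin, abs_of_pos (by positivity)]]
    rw [lintegral_map (hmW (1 - a)) (measurable_const_smul r)]
  have h3 : ∀ u : EuclideanSpace ℝ (Fin b), fcW β ((1 - a) + ‖r • u‖ ^ 2)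
      = ENNReal.ofReal (a ^ β) * fcW β (‖u‖ ^ 2) := by
    intro u
    have hnorm : ‖r • u‖ ^ 2 = a * ‖u‖ ^ 2 := by
      rw [norm_smul, mul_pow, Real.norm_eq_abs, sq_abs, Real.sq_sqrt ha.le]
    rw [hnorm]
    unfold fcW
    by_cases hu : ‖u‖ ^ 2 < 1
    · rw [if_pos hu, if_pos (by nlinarith)]
      rw [show (1 : ℝ) - (1 - a + a * ‖u‖ ^ 2) = a * (1 - ‖u‖ ^ 2) by ring]
      rw [← ENNReal.ofReal_mul (by positivity), Real.mul_rpow ha.le (by nlinarith)]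
    · rw [if_neg hu, if_neg (by nlinarith), mul_zero]
  calc ∫⁻ z : EuclideanSpace ℝ (Fin b), fcW β ((1 - a) + ‖z‖ ^ 2)
      = ENNReal.ofReal (r ^ b) * ∫⁻ u : EuclideanSpace ℝ (Fin b), fcW β ((1 - a) + ‖r • u‖ ^ 2) := by
        rw [h2, ← mul_assoc, ← ENNReal.ofReal_mul (by positivity),
          mul_inv_cancel₀ (by positivity), ENNReal.ofReal_one, one_mul]
    _ = ENNReal.ofReal (r ^ b) * (ENNReal.ofReal (a ^ β) * fcJ b β) := by
        rw [lintegral_congr h3, lintegral_const_mul _ (fcW_norm_measurable β)]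
        rfl
    _ = ENNReal.ofReal (a ^ (β + b / 2)) * fcJ b β := by
        rw [← mul_assoc, ← ENNReal.ofReal_mul (by positivity)]
        congr 2
        rw [hr, Real.sqrt_eq_rpow, ← Real.rpow_natCast (a ^ (1/2 : ℝ)) b,
          ← Real.rpow_mul ha.le, ← Real.rpow_add ha]
        ring_nf

lemma fcA0 {b : ℕ} {β a : ℝ} (ha : a ≤ 0) (c : EuclideanSpace ℝ (Fin b)) :
    ∫⁻ z : EuclideanSpace ℝ (Fin b), fcW β ((1 - a) + ‖z - c‖ ^ 2) = 0 := by
  have : ∀ z : EuclideanSpace ℝ (Fin b), fcW β ((1 - a) + ‖z - c‖ ^ 2) = 0 := by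
    intro z
    rw [fcW, if_neg (by nlinarith [sq_nonneg ‖z - c‖])]
  simp [this]

/-! ### Splitting coordinates -/

variable {k m n : ℕ}

def fcFin (h : k + m = n) : Fin k ⊕ Fin m ≃ Fin n := finSumFinEquiv.trans (finCongr h)

def fcPhi (h : k + m = n) :
    (EuclideanSpace ℝ (Fin k) × EuclideanSpace ℝ (Fin m)) ≃ᵐ EuclideanSpace ℝ (Fin n) :=
  (MeasurableEquiv.prodCongr ((MeasurableEquiv.toLp 2 (Fin k → ℝ)).symm)
      ((MeasurableEquiv.toLp 2 (Fin m → ℝ)).symm)).trans <|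
    ((MeasurableEquiv.sumPiEquivProdPi (fun _ : Fin k ⊕ Fin m => ℝ)).symm).trans <|
      (MeasurableEquiv.piCongrLeft (fun _ : Fin n => ℝ) (fcFin h)).trans
        (MeasurableEquiv.toLp 2 (Fin n → ℝ))

lemma fcPhi_measurePreserving (h : k + m = n) :
    MeasurePreserving (fcPhi h) volume volume := by
  have h1 : MeasurePreserving (MeasurableEquiv.prodCongr ((MeasurableEquiv.toLp 2 (Fin k → ℝ)).symm)
      ((MeasurableEquiv.toLp 2 (Fin m → ℝ)).symm)) volume volume := by
    rw [Measure.volume_eq_prod, Measure.volume_eq_prod]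
    exact (EuclideanSpace.volume_preserving_symm_measurableEquiv_toLp (Fin k)).prod
      (EuclideanSpace.volume_preserving_symm_measurableEquiv_toLp (Fin m))
  exact (((h1.comp (MeasurePreserving.id _)).trans
      (volume_measurePreserving_sumPiEquivProdPi_symm (fun _ : Fin k ⊕ Fin m => ℝ))).trans
      (volume_measurePreserving_piCongrLeft (fun _ : Fin n => ℝ) (fcFin h))).trans
      (EuclideanSpace.volume_preserving_symm_measurableEquiv_toLp (Fin n)).symm

lemma fcPhi_apply (h : k + m = n) (p : EuclideanSpace ℝ (Fin k) × EuclideanSpace ℝ (Fin m))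
    (j : Fin n) : fcPhi h p j = Sum.elim p.1 p.2 ((fcFin h).symm j) := by
  obtain ⟨s, rfl⟩ := (fcFin h).surjective j
  simp only [fcPhi, MeasurableEquiv.trans_apply, Equiv.symm_apply_apply]
  show (MeasurableEquiv.piCongrLeft (fun _ : Fin n => ℝ) (fcFin h)) _ (fcFin h s) = _
  rw [MeasurableEquiv.coe_piCongrLeft, Equiv.piCongrLeft_apply_apply]
  rcases s with a | b <;> rfl

lemma fc_norm_split (h : k + m = n) (y : EuclideanSpace ℝ (Fin k)) (z : EuclideanSpace ℝ (Fin m))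
    (f : EuclideanSpace ℝ (Fin n)) (hf : ∀ j, f j = Sum.elim y z ((fcFin h).symm j)) :
    ‖f‖ ^ 2 = ‖y‖ ^ 2 + ‖z‖ ^ 2 := by
  rw [fc_normsq, fc_normsq, fc_normsq]
  rw [← Equiv.sum_comp (fcFin h) (fun j => f j ^ 2)]
  have hterm : ∀ s : Fin k ⊕ Fin m,
      f (fcFin h s) ^ 2 = Sum.elim (fun a => y a ^ 2) (fun b => z b ^ 2) s := by
    intro s; rw [hf, Equiv.symm_apply_apply]; rcases s with a | b <;> rfl
  rw [Finset.sum_congr rfl (fun s _ => hterm s), Fintype.sum_sum_type]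
  rfl

lemma fc_castLE (h : k + m = n) (jj : Fin k) :
    (fcFin h).symm (Fin.castLE (by omega) jj) = Sum.inl jj := by
  rw [Equiv.symm_apply_eq]
  apply Fin.ext
  simp [fcFin]

lemma fcSplit (h : k + m = n) (G : EuclideanSpace ℝ (Fin n) → ℝ≥0∞) (hG : Measurable G) :
    ∫⁻ x : EuclideanSpace ℝ (Fin n), G x
      = ∫⁻ y : EuclideanSpace ℝ (Fin k), ∫⁻ z : EuclideanSpace ℝ (Fin m), G (fcPhi h (y, z)) := by
  rw [← (fcPhi_measurePreserving h).lintegral_comp hG]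
  rw [Measure.volume_eq_prod]
  exact lintegral_prod _ ((hG.comp (fcPhi h).measurable).aemeasurable)

/-! ### Product identity -/

lemma fcJ_split (h : k + m = n) (β : ℝ) : fcJ n β = fcJ k (β + m / 2) * fcJ m β := by
  rw [fcJ, fcSplit h _ (fcW_norm_measurable β)]
  have hinner : ∀ y : EuclideanSpace ℝ (Fin k),
      (∫⁻ z : EuclideanSpace ℝ (Fin m), fcW β (‖fcPhi h (y, z)‖ ^ 2))
        = fcW (β + m / 2) (‖y‖ ^ 2) * fcJ m β := by
    intro y
    have hz : ∀ z : EuclideanSpace ℝ (Fin m), fcW β (‖fcPhi h (y, z)‖ ^ 2)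
        = fcW β ((1 - (1 - ‖y‖ ^ 2)) + ‖z - 0‖ ^ 2) := by
      intro z
      rw [fc_norm_split h y z _ (fcPhi_apply h (y, z)), sub_zero]
      ring_nf
    rw [lintegral_congr hz]
    by_cases hy : ‖y‖ ^ 2 < 1
    · rw [fcA (by linarith) 0]
      congr 1
      rw [fcW, if_pos hy]
    · rw [fcA0 (by linarith) 0, fcW, if_neg hy, zero_mul]
  rw [lintegral_congr hinner, lintegral_mul_const _ (fcW_norm_measurable _)]
  rfl


lemma fcJ_one_eq (β : ℝ) : fcJ 1 β = ∫⁻ s : ℝ, fcW β (s ^ 2) := by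
  have mp : MeasurePreserving (fun x : EuclideanSpace ℝ (Fin 1) => x 0) volume volume :=
    (volume_preserving_funUnique (Fin 1) ℝ).comp
      (EuclideanSpace.volume_preserving_symm_measurableEquiv_toLp (Fin 1))
  have hmeas : Measurable fun s : ℝ => fcW β (s ^ 2) :=
    (fcW_measurable β).comp (measurable_id.pow measurable_const)
  rw [← mp.lintegral_comp hmeas]
  refine lintegral_congr fun x => ?_
  congr 1
  rw [EuclideanSpace.norm_eq, Real.sq_sqrt (by positivity), Fin.sum_univ_one,
    Real.norm_eq_abs, sq_abs]

lemma fcG_lt_top {β : ℝ} (hβ : -1 < β) :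
    ∫⁻ u : ℝ, (Set.Ioo (0:ℝ) 2).indicator (fun u => ENNReal.ofReal (u ^ β)) u < ⊤ := by
  rw [lintegral_indicator measurableSet_Ioo _]
  have hInt : IntegrableOn (fun u : ℝ => u ^ β) (Set.Ioo 0 2) :=
    (intervalIntegral.integrableOn_Ioo_rpow_iff two_pos).mpr hβ
  have h0 : 0 ≤ᵐ[volume.restrict (Set.Ioo (0:ℝ) 2)] fun u : ℝ => u ^ β := by
    filter_upwards [ae_restrict_mem measurableSet_Ioo] with u hu
    exact Real.rpow_nonneg hu.1.le β
  exact (hasFiniteIntegral_iff_ofReal h0).mp hInt.2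

lemma fcJ_one_lt_top {β : ℝ} (hβ : -1 < β) : fcJ 1 β < ⊤ := by
  rw [fcJ_one_eq]
  set G : ℝ → ℝ≥0∞ := (Set.Ioo (0:ℝ) 2).indicator (fun u => ENNReal.ofReal (u ^ β)) with hG
  have hGmeas : Measurable G :=
    Measurable.indicator (measurable_id.pow measurable_const).ennreal_ofReal measurableSet_Ioo
  rcases le_or_gt 0 β with hβ0 | hβ0
  · -- β ≥ 0 : integrand bounded by indicator of Ioo (-1) 1
    have hb : ∀ s : ℝ, fcW β (s ^ 2) ≤ (Set.Ioo (-1:ℝ) 1).indicator (fun _ => 1) s := by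
      intro s
      rw [fcW]
      split_ifs with hs
      · have hs' : |s| < 1 := by nlinarith [abs_nonneg s, sq_abs s]
        rw [Set.indicator_of_mem (by constructor <;> [linarith [neg_abs_le s]; linarith [le_abs_self s]])]
        exact ENNReal.ofReal_le_one.mpr (Real.rpow_le_one (by nlinarith) (by nlinarith) hβ0)
      · exact zero_le
    calc ∫⁻ s : ℝ, fcW β (s ^ 2) ≤ ∫⁻ s : ℝ, (Set.Ioo (-1:ℝ) 1).indicator (fun _ => 1) s :=
          lintegral_mono hb
      _ = volume (Set.Ioo (-1:ℝ) 1) := lintegral_indicator_one measurableSet_Ioo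
      _ < ⊤ := by rw [Real.volume_Ioo]; exact ENNReal.ofReal_lt_top
  · -- β < 0
    have hb : ∀ s : ℝ, fcW β (s ^ 2) ≤ G (1 - s) + G (1 + s) := by
      intro s
      rw [fcW]
      split_ifs with hs
      · have hs' : |s| < 1 := by nlinarith [abs_nonneg s, sq_abs s]
        have h1 : -1 < s := by linarith [neg_abs_le s]
        have h2 : s < 1 := by linarith [le_abs_self s]
        rcases le_or_gt 0 s with hss | hss
        · refine le_trans ?_ (le_add_right le_rfl)
          rw [hG, Set.indicator_of_mem (by constructor <;> linarith)]
          exact ENNReal.ofReal_le_ofReal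
            (Real.rpow_le_rpow_of_nonpos (by linarith) (by nlinarith) hβ0.le)
        · refine le_trans ?_ (le_add_left le_rfl)
          rw [hG, Set.indicator_of_mem (by constructor <;> linarith)]
          exact ENNReal.ofReal_le_ofReal
            (Real.rpow_le_rpow_of_nonpos (by linarith) (by nlinarith) hβ0.le)
      · exact zero_le
    have mp1 : MeasurePreserving (fun s : ℝ => 1 - s) volume volume := by
      have h := (measurePreserving_add_left (volume : Measure ℝ) 1).comp
        (Measure.measurePreserving_neg (volume : Measure ℝ))
      have heq : ((fun x : ℝ => 1 + x) ∘ fun s : ℝ => -s) = fun s : ℝ => 1 - s := by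
        funext s; simp [sub_eq_add_neg]
      rwa [heq] at h
    have mp2 : MeasurePreserving (fun s : ℝ => 1 + s) volume volume :=
      measurePreserving_add_left (volume : Measure ℝ) 1
    calc ∫⁻ s : ℝ, fcW β (s ^ 2) ≤ ∫⁻ s : ℝ, (G (1 - s) + G (1 + s)) := lintegral_mono hb
      _ = (∫⁻ s : ℝ, G (1 - s)) + ∫⁻ s : ℝ, G (1 + s) :=
          lintegral_add_left (hGmeas.comp (measurable_const.sub measurable_id)) _
      _ = (∫⁻ u : ℝ, G u) + ∫⁻ u : ℝ, G u := by
          rw [mp1.lintegral_comp hGmeas, mp2.lintegral_comp hGmeas]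
      _ < ⊤ := ENNReal.add_lt_top.mpr ⟨fcG_lt_top hβ, fcG_lt_top hβ⟩

lemma fcJ_zero_dim (β : ℝ) : fcJ 0 β = 1 := by
  have h1 : ∀ z : EuclideanSpace ℝ (Fin 0), fcW β (‖z‖ ^ 2) = 1 := by
    intro z
    have : ‖z‖ = 0 := by
      rw [EuclideanSpace.norm_eq]; simp
    rw [this]
    norm_num [fcW]
  rw [fcJ, lintegral_congr h1, lintegral_one]
  have mp := (EuclideanSpace.volume_preserving_symm_measurableEquiv_toLp (Fin 0))
  rw [← Set.preimage_univ (f := (MeasurableEquiv.toLp 2 (Fin 0 → ℝ)).symm),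
    mp.measure_preimage MeasurableSet.univ.nullMeasurableSet]
  rw [volume_pi, Measure.pi_univ]
  simp

lemma fcJ_lt_top : ∀ (b : ℕ) {β : ℝ}, -1 < β → fcJ b β < ⊤ := by
  intro b
  induction b with
  | zero => intro β _; rw [fcJ_zero_dim]; exact ENNReal.one_lt_top
  | succ b ih =>
    intro β hβ
    rw [fcJ_split (rfl : b + 1 = b + 1) β]
    exact ENNReal.mul_lt_top (ih (by push_cast; linarith)) (fcJ_one_lt_top hβ)

lemma fcJ_pos (b : ℕ) {β : ℝ} (hβ : β ≤ 0) : 0 < fcJ b β := by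
  have hb : ∀ z ∈ Metric.ball (0 : EuclideanSpace ℝ (Fin b)) 1, 1 ≤ fcW β (‖z‖ ^ 2) := by
    intro z hz
    rw [mem_ball_zero_iff] at hz
    have h1 : ‖z‖ ^ 2 < 1 := by nlinarith [norm_nonneg z]
    rw [fcW, if_pos h1]
    exact ENNReal.one_le_ofReal.mpr
      (Real.one_le_rpow_of_pos_of_le_one_of_nonpos (by nlinarith [norm_nonneg z]) (by nlinarith [norm_nonneg z]) hβ)
  calc (0 : ℝ≥0∞) < volume (Metric.ball (0 : EuclideanSpace ℝ (Fin b)) 1) :=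
        Metric.measure_ball_pos volume 0 one_pos
    _ = ∫⁻ _ in Metric.ball (0 : EuclideanSpace ℝ (Fin b)) 1, 1 := (setLIntegral_one _).symm
    _ ≤ ∫⁻ z in Metric.ball (0 : EuclideanSpace ℝ (Fin b)) 1, fcW β (‖z‖ ^ 2) :=
        setLIntegral_mono (fcW_norm_measurable β) hb
    _ ≤ fcJ b β := setLIntegral_le_lintegral _ _

lemma fcJ_zero_eq (b : ℕ) : fcJ b 0 = volume (Metric.ball (0 : EuclideanSpace ℝ (Fin b)) 1) := by
  have h1 : ∀ z : EuclideanSpace ℝ (Fin b), fcW 0 (‖z‖ ^ 2)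
      = (Metric.ball (0 : EuclideanSpace ℝ (Fin b)) 1).indicator (fun _ => 1) z := by
    intro z
    rw [fcW]
    by_cases h : ‖z‖ ^ 2 < 1
    · rw [if_pos h, Set.indicator_of_mem (mem_ball_zero_iff.mpr (by nlinarith [norm_nonneg z]))]
      norm_num
    · rw [if_neg h, Set.indicator_of_notMem (by
        rw [mem_ball_zero_iff]
        intro hc
        exact h (by nlinarith [norm_nonneg z]))]
  rw [fcJ, lintegral_congr h1]
  exact lintegral_indicator_one measurableSet_ball


-- measure preserving of isometry equivs
lemma fcIso_measurePreserving (T : EuclideanSpace ℝ (Fin n) ≃ᵢ EuclideanSpace ℝ (Fin n)) :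
    MeasurePreserving T volume volume := by
  have hT : (T : EuclideanSpace ℝ (Fin n) → EuclideanSpace ℝ (Fin n))
      = (fun x => x + T 0) ∘ (T.toRealLinearIsometryEquiv : _ → _) := by
    funext x
    simp [IsometryEquiv.toRealLinearIsometryEquiv_apply, sub_add_cancel]
  rw [hT]
  exact (measurePreserving_add_right volume (T 0)).comp
    T.toRealLinearIsometryEquiv.measurePreserving

-- quadratic decomposition of ‖T (φ (y, z))‖² as a function of z
lemma fcQuad (h : k + m = n) (T : EuclideanSpace ℝ (Fin n) ≃ᵢ EuclideanSpace ℝ (Fin n))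
    (y : EuclideanSpace ℝ (Fin k)) :
    ∃ (c : EuclideanSpace ℝ (Fin m)) (d : ℝ), 0 ≤ d ∧
      ∀ z : EuclideanSpace ℝ (Fin m), ‖T (fcPhi h (y, z))‖ ^ 2 = d + ‖z - c‖ ^ 2 := by
  set M := T.toRealLinearIsometryEquiv with hM
  have hTx : ∀ x, T x = M x + T 0 := by
    intro x; rw [hM]; simp [IsometryEquiv.toRealLinearIsometryEquiv_apply, sub_add_cancel]
  set ι : EuclideanSpace ℝ (Fin m) → EuclideanSpace ℝ (Fin n) := fun z => fcPhi h (0, z) with hι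
  have hsplit : ∀ z, fcPhi h (y, z) = fcPhi h (y, 0) + ι z := by
    intro z
    ext j
    have h1 := fcPhi_apply h (y, z) j
    have h2 := fcPhi_apply h (y, (0 : EuclideanSpace ℝ (Fin m))) j
    have h3 := fcPhi_apply h ((0 : EuclideanSpace ℝ (Fin k)), z) j
    show fcPhi h (y, z) j = fcPhi h (y, 0) j + fcPhi h (0, z) j
    rw [h1, h2, h3]
    rcases (fcFin h).symm j with a | b <;> simp
  set u : EuclideanSpace ℝ (Fin n) := M (fcPhi h (y, 0)) + T 0 with hu
  set w : EuclideanSpace ℝ (Fin n) := M.symm u with hw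
  set c : EuclideanSpace ℝ (Fin m) := WithLp.toLp 2 (fun j => w (fcFin h (Sum.inr j))) with hc
  have hq : ∀ z, T (fcPhi h (y, z)) = M (ι z) + u := by
    intro z
    rw [hTx, hsplit, map_add, hu]
    abel
  have hιnorm : ∀ z, ‖ι z‖ ^ 2 = ‖z‖ ^ 2 := by
    intro z
    rw [fc_norm_split h 0 z (ι z) (fun j => fcPhi_apply h (0, z) j)]
    simp
  have hinner : ∀ z, (inner ℝ (M (ι z)) (u) : ℝ) = (inner ℝ (z) (c) : ℝ) := by
    intro z
    have h1 : (inner ℝ (M (ι z)) (u) : ℝ) = (inner ℝ (ι z) (w) : ℝ) := by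
      conv_lhs => rw [show u = M w by rw [hw]; simp]
      exact M.inner_map_map (ι z) w
    rw [h1]
    have h2 : (inner ℝ (ι z) (w) : ℝ) = ∑ i : Fin n, ι z i * w i := by
      simp [PiLp.inner_apply, RCLike.inner_apply, starRingEnd_apply, star_trivial, mul_comm]
    have h3 : (inner ℝ (z) (c) : ℝ) = ∑ j : Fin m, z j * c j := by
      simp [PiLp.inner_apply, RCLike.inner_apply, starRingEnd_apply, star_trivial, mul_comm]
    rw [h2, h3, ← Equiv.sum_comp (fcFin h) (fun i => ι z i * w i), Fintype.sum_sum_type]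
    have hz1 : ∀ a : Fin k, ι z (fcFin h (Sum.inl a)) = 0 := by
      intro a; rw [hι]
      show fcPhi h (0, z) (fcFin h (Sum.inl a)) = 0
      rw [fcPhi_apply h, Equiv.symm_apply_apply]
      rfl
    have hz2 : ∀ b : Fin m, ι z (fcFin h (Sum.inr b)) = z b := by
      intro b; rw [hι]
      show fcPhi h (0, z) (fcFin h (Sum.inr b)) = z b
      rw [fcPhi_apply h, Equiv.symm_apply_apply]
      rfl
    simp only [hz1, hz2, zero_mul, Finset.sum_const_zero, zero_add]
    rfl
  refine ⟨-c, ‖u‖ ^ 2 - ‖c‖ ^ 2, ?_, ?_⟩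
  · -- d ≥ 0
    have hwu : ‖w‖ ^ 2 = ‖u‖ ^ 2 := by rw [hw, M.symm.norm_map]
    have hcw : ‖c‖ ^ 2 ≤ ‖w‖ ^ 2 := by
      rw [fc_normsq c, fc_normsq w, ← Equiv.sum_comp (fcFin h) (fun i => w i ^ 2),
        Fintype.sum_sum_type]
      have : ∑ j : Fin m, c j ^ 2 = ∑ j : Fin m, w (fcFin h (Sum.inr j)) ^ 2 := by rfl
      rw [this]
      exact le_add_of_nonneg_left (Finset.sum_nonneg fun a _ => sq_nonneg _)
    linarith
  · intro z
    have e1 : ‖T (fcPhi h (y, z))‖ ^ 2 = ‖z‖ ^ 2 + 2 * (inner ℝ (z) (c) : ℝ) + ‖u‖ ^ 2 := by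
      rw [hq, norm_add_sq_real, hinner, M.norm_map, hιnorm]
    have e2 : ‖z - -c‖ ^ 2 = ‖z‖ ^ 2 + 2 * (inner ℝ (z) (c) : ℝ) + ‖c‖ ^ 2 := by
      rw [sub_neg_eq_add, norm_add_sq_real]
    rw [e1, e2]
    ring

lemma fc_coords_measurable (hkn : k ≤ n) :
    Measurable fun x : EuclideanSpace ℝ (Fin n) =>
      (WithLp.toLp 2 (fun jj : Fin k => x (Fin.castLE hkn jj)) : EuclideanSpace ℝ (Fin k)) := by
  exact (MeasurableEquiv.toLp 2 (Fin k → ℝ)).measurable.comp (measurable_pi_lambda _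
    (fun jj => (measurable_pi_apply _).comp (MeasurableEquiv.toLp 2 (Fin n → ℝ)).symm.measurable))

lemma fcCylBound (h : k + m = n) {α : ℝ} (hα : 0 < α + m / 2)
    (S : Set (EuclideanSpace ℝ (Fin k))) (hS : MeasurableSet S)
    (T : EuclideanSpace ℝ (Fin n) ≃ᵢ EuclideanSpace ℝ (Fin n)) (hkn : k ≤ n) :
    ∫⁻ x in T '' {x : EuclideanSpace ℝ (Fin n) |
        WithLp.toLp 2 (fun jj : Fin k => x (Fin.castLE hkn jj)) ∈ S}, fcW α (‖x‖ ^ 2)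
      ≤ volume S * fcJ m α := by
  set U : Set (EuclideanSpace ℝ (Fin n)) :=
    {x | WithLp.toLp 2 (fun jj : Fin k => x (Fin.castLE hkn jj)) ∈ S} with hUdef
  have hU : MeasurableSet U := fc_coords_measurable hkn hS
  have himg : T '' U = (T.symm : EuclideanSpace ℝ (Fin n) → _) ⁻¹' U := by
    ext x
    constructor
    · rintro ⟨a, ha, rfl⟩; simpa using ha
    · intro hx; exact ⟨T.symm x, hx, by simp⟩
  have hTU : MeasurableSet (T '' U) := by
    rw [himg]; exact T.symm.continuous.measurable hU
  have hWT : Measurable fun x : EuclideanSpace ℝ (Fin n) => fcW α (‖T x‖ ^ 2) :=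
    (fcW_measurable α).comp ((T.continuous.norm.pow 2).measurable)
  have hG : Measurable fun x : EuclideanSpace ℝ (Fin n) =>
      U.indicator (fun x' => fcW α (‖T x'‖ ^ 2)) x := hWT.indicator hU
  have step1 : ∫⁻ x in T '' U, fcW α (‖x‖ ^ 2)
      = ∫⁻ x : EuclideanSpace ℝ (Fin n), U.indicator (fun x' => fcW α (‖T x'‖ ^ 2)) x := by
    rw [← lintegral_indicator hTU]
    rw [← (fcIso_measurePreserving T).lintegral_comp
      ((fcW_norm_measurable α).indicator hTU)]
    refine lintegral_congr fun x => ?_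
    by_cases hx : x ∈ U
    · rw [Set.indicator_of_mem hx, Set.indicator_of_mem (Set.mem_image_of_mem _ hx)]
    · rw [Set.indicator_of_notMem hx, Set.indicator_of_notMem
        (fun hc => hx ((T.injective.mem_set_image).mp hc))]
  rw [step1, fcSplit h _ hG]
  have hcoord : ∀ (y : EuclideanSpace ℝ (Fin k)) (z : EuclideanSpace ℝ (Fin m)),
      (fcPhi h (y, z) ∈ U) ↔ y ∈ S := by
    intro y z
    have : WithLp.toLp 2 (fun jj : Fin k => fcPhi h (y, z) (Fin.castLE hkn jj)) = y := by
      ext jj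
      show fcPhi h (y, z) (Fin.castLE hkn jj) = y jj
      rw [fcPhi_apply h, fc_castLE h]
      rfl
    rw [hUdef]
    simp only [Set.mem_setOf_eq, this]
  have hbound : ∀ y : EuclideanSpace ℝ (Fin k),
      (∫⁻ z : EuclideanSpace ℝ (Fin m),
        U.indicator (fun x' => fcW α (‖T x'‖ ^ 2)) (fcPhi h (y, z)))
        ≤ S.indicator (fun _ => fcJ m α) y := by
    intro y
    by_cases hy : y ∈ S
    · rw [Set.indicator_of_mem hy]
      have hIn : ∀ z, U.indicator (fun x' => fcW α (‖T x'‖ ^ 2)) (fcPhi h (y, z))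
          = fcW α (‖T (fcPhi h (y, z))‖ ^ 2) := fun z =>
        Set.indicator_of_mem ((hcoord y z).mpr hy) _
      rw [lintegral_congr hIn]
      obtain ⟨c, d, hd, hquad⟩ := fcQuad h T y
      have hrw : ∀ z, fcW α (‖T (fcPhi h (y, z))‖ ^ 2)
          = fcW α ((1 - (1 - d)) + ‖z - c‖ ^ 2) := by
        intro z; rw [hquad z]; ring_nf
      rw [lintegral_congr hrw]
      rcases lt_or_ge 0 (1 - d) with hd1 | hd1
      · rw [fcA hd1 c]
        calc ENNReal.ofReal ((1 - d) ^ (α + m / 2)) * fcJ m α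
            ≤ 1 * fcJ m α := by
              refine mul_le_mul_left (ENNReal.ofReal_le_one.mpr ?_) _
              exact Real.rpow_le_one hd1.le (by linarith) hα.le
          _ = fcJ m α := one_mul _
      · rw [fcA0 hd1 c]; exact zero_le
    · rw [Set.indicator_of_notMem hy]
      have hIn : ∀ z, U.indicator (fun x' => fcW α (‖T x'‖ ^ 2)) (fcPhi h (y, z)) = 0 :=
        fun z => Set.indicator_of_notMem (fun hc => hy ((hcoord y z).mp hc)) _
      rw [lintegral_congr hIn]
      simp
  calc ∫⁻ y, ∫⁻ z, U.indicator (fun x' => fcW α (‖T x'‖ ^ 2)) (fcPhi h (y, z))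
      ≤ ∫⁻ y, S.indicator (fun _ => fcJ m α) y := lintegral_mono hbound
    _ = fcJ m α * volume S := lintegral_indicator_const hS _
    _ = volume S * fcJ m α := mul_comm _ _

lemma fcIso_image_measurable (T : EuclideanSpace ℝ (Fin n) ≃ᵢ EuclideanSpace ℝ (Fin n))
    {U : Set (EuclideanSpace ℝ (Fin n))} (hU : MeasurableSet U) :
    MeasurableSet (T '' U) := by
  have himg : T '' U = (T.symm : EuclideanSpace ℝ (Fin n) → _) ⁻¹' U := by
    ext x
    constructor
    · rintro ⟨a, ha, rfl⟩; simpa using ha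
    · intro hx; exact ⟨T.symm x, hx, by simp⟩
  rw [himg]; exact T.symm.continuous.measurable hU

lemma fcJ_zero_val (b : ℕ) :
    fcJ b 0 = ENNReal.ofReal (Real.sqrt Real.pi ^ b / Real.Gamma (b / 2 + 1)) := by
  cases b with
  | zero =>
    rw [fcJ_zero_dim]
    norm_num [Real.Gamma_one]
  | succ b =>
    rw [fcJ_zero_eq, EuclideanSpace.volume_ball]
    simp [Fintype.card_fin]

/-- Fractional covering of the closed Euclidean unit ball `B^n` by
`m`-dimensional Euclidean cylinders (`n > m ≥ 2`): if weights `t i ≥ 0` satisfy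
`Σ_{i : x ∈ Z i} t i ≥ 1` for every `x ∈ B^n`, then
`Σ t i · vol_{n−m}(X i) ≥ π^{(n−m)/2} Γ(m/2) / Γ(n/2)`. -/
theorem fractional_covering_ball_by_cylinders
    (n m : ℕ) (hm : 2 ≤ m) (hmn : m < n) (N : ℕ)
    (X : Fin N → Set (EuclideanSpace ℝ (Fin (n - m))))
    (hX : ∀ i, IsCompact (X i) ∧ Convex ℝ (X i) ∧ (interior (X i)).Nonempty)
    (T : Fin N → (EuclideanSpace ℝ (Fin n) ≃ᵢ EuclideanSpace ℝ (Fin n)))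
    (Z : Fin N → Set (EuclideanSpace ℝ (Fin n)))
    (hZ : ∀ i, Z i = T i ''
      {x | WithLp.toLp 2 (fun jj : Fin (n - m) => x (Fin.castLE (Nat.sub_le n m) jj)) ∈ X i})
    (t : Fin N → ℝ) (ht : ∀ i, 0 ≤ t i)
    (hcover : ∀ x ∈ Metric.closedBall (0 : EuclideanSpace ℝ (Fin n)) 1,
      1 ≤ ∑ i, if x ∈ Z i then t i else 0) :
    Real.pi ^ (((n : ℝ) - (m : ℝ)) / 2) * Real.Gamma ((m : ℝ) / 2) / Real.Gamma ((n : ℝ) / 2) ≤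
      ∑ i, t i * (volume (X i)).toReal := by
  have hkm : (n - m) + m = n := by omega
  have hm2 : (2 : ℝ) ≤ (m : ℝ) := by exact_mod_cast hm
  have hXm : ∀ i, MeasurableSet (X i) := fun i => ((hX i).1.isClosed).measurableSet
  have hZm : ∀ i, MeasurableSet (Z i) := by
    intro i; rw [hZ i]
    exact fcIso_image_measurable (T i) (fc_coords_measurable (Nat.sub_le n m) (hXm i))
  set R : ℝ≥0∞ := ∑ i, ENNReal.ofReal (t i) * volume (X i) with hR
  -- Key inequality for each exponent α ∈ (-1, 0]
  have key : ∀ α : ℝ, -1 < α → α ≤ 0 → fcJ (n - m) (α + m / 2) ≤ R := by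
    intro α hα1 hα2
    have hα3 : 0 < α + (m : ℝ) / 2 := by linarith
    -- pointwise covering bound
    have hc1 : ∀ x : EuclideanSpace ℝ (Fin n), fcW α (‖x‖ ^ 2)
        ≤ ∑ i, (Z i).indicator (fun _ => ENNReal.ofReal (t i)) x * fcW α (‖x‖ ^ 2) := by
      intro x
      by_cases hx : ‖x‖ ≤ 1
      · have h0 := hcover x (mem_closedBall_zero_iff.mpr hx)
        have h1 : (1 : ℝ≥0∞) ≤ ∑ i, (Z i).indicator (fun _ => ENNReal.ofReal (t i)) x := by
          calc (1 : ℝ≥0∞) = ENNReal.ofReal 1 := ENNReal.ofReal_one.symm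
            _ ≤ ENNReal.ofReal (∑ i, if x ∈ Z i then t i else 0) := ENNReal.ofReal_le_ofReal h0
            _ = ∑ i, (Z i).indicator (fun _ => ENNReal.ofReal (t i)) x := by
                rw [ENNReal.ofReal_sum_of_nonneg (fun i _ => by
                  split_ifs with h; exacts [ht i, le_rfl])]
                refine Finset.sum_congr rfl fun i _ => ?_
                rw [Set.indicator_apply]
                split_ifs <;> simp
        calc fcW α (‖x‖ ^ 2) = 1 * fcW α (‖x‖ ^ 2) := (one_mul _).symm
          _ ≤ (∑ i, (Z i).indicator (fun _ => ENNReal.ofReal (t i)) x) * fcW α (‖x‖ ^ 2) :=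
              mul_le_mul_left h1 _
          _ = ∑ i, (Z i).indicator (fun _ => ENNReal.ofReal (t i)) x * fcW α (‖x‖ ^ 2) :=
              Finset.sum_mul _ _ _
      · have : fcW α (‖x‖ ^ 2) = 0 := by
          rw [fcW, if_neg (by push_neg at hx; nlinarith)]
        rw [this]
        simp
    have hint : fcJ n α ≤ ∑ i, ENNReal.ofReal (t i) * ∫⁻ x in Z i, fcW α (‖x‖ ^ 2) := by
      calc fcJ n α ≤ ∫⁻ x : EuclideanSpace ℝ (Fin n),
            ∑ i, (Z i).indicator (fun _ => ENNReal.ofReal (t i)) x * fcW α (‖x‖ ^ 2) :=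
            lintegral_mono hc1
        _ = ∑ i, ∫⁻ x : EuclideanSpace ℝ (Fin n),
              (Z i).indicator (fun _ => ENNReal.ofReal (t i)) x * fcW α (‖x‖ ^ 2) :=
            lintegral_finset_sum _ (fun i _ =>
              ((measurable_const.indicator (hZm i)).mul (fcW_norm_measurable α)))
        _ = ∑ i, ENNReal.ofReal (t i) * ∫⁻ x in Z i, fcW α (‖x‖ ^ 2) := by
            refine Finset.sum_congr rfl fun i _ => ?_
            have heq : ∀ x, (Z i).indicator (fun _ => ENNReal.ofReal (t i)) x * fcW α (‖x‖ ^ 2)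
                = (Z i).indicator (fun x => ENNReal.ofReal (t i) * fcW α (‖x‖ ^ 2)) x := by
              intro x
              by_cases hx : x ∈ Z i
              · rw [Set.indicator_of_mem hx, Set.indicator_of_mem hx]
              · rw [Set.indicator_of_notMem hx, Set.indicator_of_notMem hx, zero_mul]
            rw [lintegral_congr heq, lintegral_indicator (hZm i),
              lintegral_const_mul _ (fcW_norm_measurable α)]
    have hcyl : ∀ i, ∫⁻ x in Z i, fcW α (‖x‖ ^ 2) ≤ volume (X i) * fcJ m α := by
      intro i; rw [hZ i]
      exact fcCylBound hkm hα3 (X i) (hXm i) (T i) (Nat.sub_le n m)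
    have htot : fcJ n α ≤ R * fcJ m α := by
      calc fcJ n α ≤ ∑ i, ENNReal.ofReal (t i) * (volume (X i) * fcJ m α) :=
            hint.trans (Finset.sum_le_sum fun i _ => mul_le_mul_right (hcyl i) _)
        _ = R * fcJ m α := by
            rw [hR, Finset.sum_mul]
            exact Finset.sum_congr rfl fun i _ => (mul_assoc _ _ _).symm
    rw [fcJ_split hkm α] at htot
    exact (ENNReal.mul_le_mul_iff_left (fcJ_pos m hα2).ne' (fcJ_lt_top m hα1).ne).mp htot
  -- Monotone-convergence limit α ↓ -1
  have hlim : fcJ (n - m) ((m : ℝ) / 2 - 1) ≤ R := by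
    set g : ℕ → EuclideanSpace ℝ (Fin (n - m)) → ℝ≥0∞ :=
      fun j y => fcW (((m : ℝ) / 2 - 1) + 1 / (j + 1)) (‖y‖ ^ 2) with hg
    have hWmono : ∀ {β β' : ℝ}, β' ≤ β → ∀ s : ℝ, 0 ≤ s → fcW β s ≤ fcW β' s := by
      intro β β' hββ s hs0
      rw [fcW, fcW]
      split_ifs with hs
      · exact ENNReal.ofReal_le_ofReal
          (Real.rpow_le_rpow_of_exponent_ge (by linarith) (by linarith) hββ)
      · exact le_rfl
    have hmono : Monotone g := by
      intro j j' hjj y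
      refine hWmono (by
        have h1 : (1 : ℝ) / (j' + 1) ≤ 1 / (j + 1) := by
          apply one_div_le_one_div_of_le
          · positivity
          · exact_mod_cast by omega
        linarith) _ (by positivity)
    have hsup : ∀ y : EuclideanSpace ℝ (Fin (n - m)),
        (⨆ j, g j y) = fcW ((m : ℝ) / 2 - 1) (‖y‖ ^ 2) := by
      intro y
      set s : ℝ := ‖y‖ ^ 2
      by_cases hs : s < 1
      · have hmy : Monotone fun j => g j y := fun j j' hjj => hmono hjj y
        refine tendsto_nhds_unique (tendsto_atTop_iSup hmy) ?_
        have h1 : Filter.Tendsto (fun j : ℕ => ((m : ℝ) / 2 - 1) + 1 / (j + 1))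
            Filter.atTop (nhds ((m : ℝ) / 2 - 1)) := by
          have := tendsto_one_div_add_atTop_nhds_zero_nat.const_add ((m : ℝ) / 2 - 1)
          simpa using this
        have h2 : Filter.Tendsto (fun j : ℕ => (1 - s) ^ (((m : ℝ) / 2 - 1) + 1 / (j + 1)))
            Filter.atTop (nhds ((1 - s) ^ ((m : ℝ) / 2 - 1))) :=
          ((Real.continuousAt_const_rpow (by linarith : (1 : ℝ) - s ≠ 0)).tendsto).comp h1
        have h3 := (ENNReal.continuous_ofReal.continuousAt.tendsto).comp h2
        have hgj : ∀ j : ℕ, g j y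
            = ENNReal.ofReal ((1 - s) ^ (((m : ℝ) / 2 - 1) + 1 / (j + 1))) := by
          intro j; rw [hg]; simp only; rw [fcW, if_pos hs]
        have hW : fcW ((m : ℝ) / 2 - 1) s = ENNReal.ofReal ((1 - s) ^ ((m : ℝ) / 2 - 1)) := by
          rw [fcW, if_pos hs]
        rw [hW]
        refine Filter.Tendsto.congr (fun j => (hgj j).symm) h3
      · have hgj : ∀ j : ℕ, g j y = 0 := by
          intro j; rw [hg]; simp only; rw [fcW, if_neg hs]
        have hW : fcW ((m : ℝ) / 2 - 1) s = 0 := by rw [fcW, if_neg hs]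
        rw [hW]
        simp [hgj]
    calc fcJ (n - m) ((m : ℝ) / 2 - 1)
        = ∫⁻ y : EuclideanSpace ℝ (Fin (n - m)), ⨆ j, g j y := by
          rw [fcJ]; exact lintegral_congr fun y => (hsup y).symm
      _ = ⨆ j, ∫⁻ y : EuclideanSpace ℝ (Fin (n - m)), g j y :=
          lintegral_iSup (fun j => fcW_norm_measurable _) hmono
      _ ≤ R := by
          refine iSup_le fun j => ?_
          have hkey := key (-1 + 1 / (j + 1))
            (by
              have h0 : (0 : ℝ) < 1 / ((j : ℝ) + 1) := by positivity
              linarith)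
            (by
              have h1 : (1 : ℝ) / (j + 1) ≤ 1 := by
                rw [div_le_one (by positivity)]
                have : (0 : ℝ) ≤ j := Nat.cast_nonneg j
                linarith
              linarith)
          have : (-1 + 1 / ((j : ℝ) + 1)) + (m : ℝ) / 2 = ((m : ℝ) / 2 - 1) + 1 / (j + 1) := by
            ring
          rw [this] at hkey
          exact hkey
  -- Value of the limit integral via ball volumes
  have h2 : fcJ (n - 2) 0 = fcJ (n - m) ((m : ℝ) / 2 - 1) * fcJ (m - 2) 0 := by
    have hsplit := fcJ_split (show (n - m) + (m - 2) = n - 2 by omega) (0 : ℝ)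
    rw [hsplit]
    congr 2
    rw [Nat.cast_sub hm]
    ring
  set v2 : ℝ := Real.sqrt Real.pi ^ (m - 2) / Real.Gamma (((m - 2 : ℕ) : ℝ) / 2 + 1) with hv2
  set vn2 : ℝ := Real.sqrt Real.pi ^ (n - 2) / Real.Gamma (((n - 2 : ℕ) : ℝ) / 2 + 1) with hvn2
  have hπpos : (0 : ℝ) < Real.sqrt Real.pi := Real.sqrt_pos.mpr Real.pi_pos
  have hv2pos : 0 < v2 := div_pos (pow_pos hπpos _) (Real.Gamma_pos_of_pos (by positivity))
  have hvn2pos : 0 < vn2 := div_pos (pow_pos hπpos _) (Real.Gamma_pos_of_pos (by positivity))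
  have hval : fcJ (n - m) ((m : ℝ) / 2 - 1) = ENNReal.ofReal (vn2 / v2) := by
    rw [ENNReal.ofReal_div_of_pos hv2pos, ← fcJ_zero_val, ← fcJ_zero_val]
    rw [ENNReal.eq_div_iff (by
        rw [fcJ_zero_val]
        exact (ENNReal.ofReal_pos.mpr hv2pos).ne') (fcJ_lt_top (m - 2) (by norm_num)).ne]
    rw [mul_comm]
    exact h2.symm
  -- Convert to the stated constant
  have hGm : 0 < Real.Gamma ((m : ℝ) / 2) := Real.Gamma_pos_of_pos (by linarith)
  have hGn : 0 < Real.Gamma ((n : ℝ) / 2) := Real.Gamma_pos_of_pos (by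
    have : (m : ℝ) < n := by exact_mod_cast hmn
    linarith)
  have hCreal : vn2 / v2
      = Real.pi ^ (((n : ℝ) - (m : ℝ)) / 2) * Real.Gamma ((m : ℝ) / 2)
        / Real.Gamma ((n : ℝ) / 2) := by
    have hn2 : ((n - 2 : ℕ) : ℝ) / 2 + 1 = (n : ℝ) / 2 := by
      rw [Nat.cast_sub (by omega : 2 ≤ n)]; ring
    have hm2' : ((m - 2 : ℕ) : ℝ) / 2 + 1 = (m : ℝ) / 2 := by
      rw [Nat.cast_sub hm]; ring
    have hpow2 : Real.sqrt Real.pi ^ (n - m) = Real.pi ^ (((n : ℝ) - (m : ℝ)) / 2) := by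
      rw [Real.sqrt_eq_rpow, ← Real.rpow_natCast (Real.pi ^ (1/2 : ℝ)) (n - m),
        ← Real.rpow_mul Real.pi_pos.le]
      congr 1
      rw [Nat.cast_sub hmn.le]
      ring
    have hpow : Real.sqrt Real.pi ^ (n - 2)
        = Real.sqrt Real.pi ^ (m - 2) * Real.pi ^ (((n : ℝ) - (m : ℝ)) / 2) := by
      rw [← hpow2, ← pow_add]
      congr 1
      omega
    rw [hvn2, hv2, hn2, hm2', hpow]
    field_simp
  have hofR : ENNReal.ofReal (Real.pi ^ (((n : ℝ) - (m : ℝ)) / 2) * Real.Gamma ((m : ℝ) / 2)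
      / Real.Gamma ((n : ℝ) / 2)) ≤ R := by
    rw [← hCreal, ← hval]
    exact hlim
  have hRtop : R ≠ ⊤ := by
    rw [hR]
    exact (ENNReal.sum_lt_top.mpr fun i _ =>
      ENNReal.mul_lt_top ENNReal.ofReal_lt_top ((hX i).1.measure_lt_top)).ne
  have hfin : Real.pi ^ (((n : ℝ) - (m : ℝ)) / 2) * Real.Gamma ((m : ℝ) / 2)
      / Real.Gamma ((n : ℝ) / 2) ≤ R.toReal := by
    have h3 := ENNReal.toReal_mono hRtop hofR
    rwa [ENNReal.toReal_ofReal (by positivity)] at h3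
  have hRval : R.toReal = ∑ i, t i * (volume (X i)).toReal := by
    rw [hR, ENNReal.toReal_sum (fun i _ =>
      (ENNReal.mul_lt_top ENNReal.ofReal_lt_top ((hX i).1.measure_lt_top)).ne)]
    exact Finset.sum_congr rfl fun i _ => by
      rw [ENNReal.toReal_mul, ENNReal.toReal_ofReal (ht i)]
  linarith [hfin, hRval.symm.le]

end FracCover
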